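/- Let ξ = re^{iθ} with r > 1 and θ ∈ [0,π/4], and let 𝔻 := ⋃_{d∈𝒟} (closure(𝒳) + d). If 𝔻 is a rectangle, i.e. 𝔻 = {a + bi : a ∈ [x₁,x₂], b ∈ [y₁,y₂]} for some reals x₁ < x₂ and y₁ < y₂, then 𝔻 is a square, i.e. x₂ − x₁ = y₂ − y₁. -/

import Mathlib

/-- The fundamental domain `𝒳 = {a + b i : a, b ∈ [−1/2, 1/2)}` of the lattice `ℤ[i]`. -/
def cX : Set ℂ :=
  {z : ℂ | z.re ∈ Set.Ico (-(1 / 2) : ℝ) (1 / 2) ∧ z.im ∈ Set.Ico (-(1 / 2) : ℝ) (1 / 2)}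

/-- The digit map: `d(z) = ⌊Re(ξz) + 1/2⌋ + ⌊Im(ξz) + 1/2⌋ i`. -/
noncomputable def cdg (ξ z : ℂ) : ℂ :=
  (⌊(ξ * z).re + 1 / 2⌋ : ℤ) + (⌊(ξ * z).im + 1 / 2⌋ : ℤ) * Complex.I

/-- The transformation `𝕋 z = ξ z − d(z)`. -/
noncomputable def cT (ξ z : ℂ) : ℂ := ξ * z - cdg ξ z

/-- `cdig ξ n z` is the `(n+1)`-th digit `d_{n+1}(z) = d(𝕋^[n] z)`. -/
noncomputable def cdig (ξ : ℂ) (n : ℕ) (z : ℂ) : ℂ := cdg ξ ((cT ξ)^[n] z)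

/-- The digit set `𝒟 = {d(z) : z ∈ 𝒳}`. -/
noncomputable def cD (ξ : ℂ) : Set ℂ := cdg ξ '' cX

/-- `ξ` has a square digit set of size `N`. -/
noncomputable def squareDS (ξ : ℂ) (N : ℕ) : Prop :=
  cD ξ = {w : ℂ | ∃ a b : ℤ, w = (a : ℂ) + (b : ℂ) * Complex.I ∧ |a| ≤ (N : ℤ) ∧ |b| ≤ (N : ℤ)}

lemma cdg_re (ξ z : ℂ) : (cdg ξ z).re = (⌊(ξ * z).re + 1 / 2⌋ : ℤ) := by
  simp [cdg]

lemma cdg_im (ξ z : ℂ) : (cdg ξ z).im = (⌊(ξ * z).im + 1 / 2⌋ : ℤ) := by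
  simp [cdg]

lemma closure_cX : closure cX =
    {z : ℂ | z.re ∈ Set.Icc (-(1 / 2) : ℝ) (1 / 2) ∧ z.im ∈ Set.Icc (-(1 / 2) : ℝ) (1 / 2)} := by
  have h : cX = Set.Ico (-(1 / 2) : ℝ) (1 / 2) ×ℂ Set.Ico (-(1 / 2) : ℝ) (1 / 2) := rfl
  rw [h, Complex.closure_reProdIm, closure_Ico (by norm_num : (-(1/2) : ℝ) ≠ 1/2)]
  rfl

set_option maxHeartbeats 2000000 in
/-- If `𝔻 = ⋃_{d ∈ 𝒟}(closure 𝒳 + d)` is a rectangle, then it is a square. -/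
theorem stmt8 (r θ : ℝ) (hr : 1 < r) (hθ : θ ∈ Set.Icc 0 (Real.pi / 4))
    (ξ : ℂ) (hξ : ξ = (r : ℂ) * Complex.exp (θ * Complex.I))
    (x₁ x₂ y₁ y₂ : ℝ) (hx : x₁ < x₂) (hy : y₁ < y₂)
    (hrect : (⋃ d ∈ cD ξ, (fun z : ℂ => z + d) '' closure cX)
      = {z : ℂ | z.re ∈ Set.Icc x₁ x₂ ∧ z.im ∈ Set.Icc y₁ y₂}) :
    x₂ - x₁ = y₂ - y₁ := by
  obtain ⟨hθ0, hθ4⟩ := hθ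
  have hπ := Real.pi_pos
  set c := Real.cos θ with hcdef
  set s := Real.sin θ with hsdef
  have hc : 0 < c := Real.cos_pos_of_mem_Ioo ⟨by linarith, by linarith⟩
  have hs : 0 ≤ s := Real.sin_nonneg_of_nonneg_of_le_pi hθ0 (by linarith)
  have hcs1 : c ^ 2 + s ^ 2 = 1 := by
    rw [hcdef, hsdef, add_comm]; exact Real.sin_sq_add_cos_sq θ
  have hcs : 1 ≤ c + s := by nlinarith
  have hr0 : (0 : ℝ) < r := by linarith
  -- real/imag parts of ξ
  have hξre : ξ.re = r * c := by
    rw [hξ, Complex.exp_mul_I]; simp [← Complex.ofReal_cos, ← Complex.ofReal_sin]; exact Or.inl rfl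
  have hξim : ξ.im = r * s := by
    rw [hξ, Complex.exp_mul_I]; simp [← Complex.ofReal_cos, ← Complex.ofReal_sin]; exact Or.inl rfl
  have hre : ∀ z : ℂ, (ξ * z).re = r * c * z.re - r * s * z.im := by
    intro z; rw [Complex.mul_re, hξre, hξim]
  have him : ∀ z : ℂ, (ξ * z).im = r * s * z.re + r * c * z.im := by
    intro z; rw [Complex.mul_im, hξre, hξim]; ring
  set M := r * (c + s) / 2 with hMdef
  have hM : 1 / 2 < M := by rw [hMdef]; nlinarith
  have hM0 : (0 : ℝ) < 2 * M := by linarith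
  have hrcs : r * (c + s) = 2 * M := by rw [hMdef]; ring
  have hrc0 : 0 ≤ r * c := (mul_pos hr0 hc).le
  have hrs0 : 0 ≤ r * s := mul_nonneg hr0.le hs
  -- bounds on ξ*z for z ∈ cX
  have hub : ∀ z ∈ cX, -M ≤ (ξ * z).re ∧ (ξ * z).re < M ∧
      -M ≤ (ξ * z).im ∧ (ξ * z).im < M := by
    rintro z ⟨⟨ha1, ha2⟩, ⟨hb1, hb2⟩⟩
    rw [hre, him]
    refine ⟨?_, ?_, ?_, ?_⟩
    · have e1 : r * c * z.re - r * s * z.im + M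
          = r * c * (z.re + 1/2) + r * s * (1/2 - z.im) := by rw [hMdef]; ring
      linarith [e1, mul_nonneg hrc0 (by linarith : (0:ℝ) ≤ z.re + 1/2),
        mul_nonneg hrs0 (by linarith : (0:ℝ) ≤ 1/2 - z.im)]
    · have e1 : M - (r * c * z.re - r * s * z.im)
          = r * c * (1/2 - z.re) + r * s * (z.im + 1/2) := by rw [hMdef]; ring
      linarith [e1, mul_pos (mul_pos hr0 hc) (by linarith : (0:ℝ) < 1/2 - z.re),
        mul_nonneg hrs0 (by linarith : (0:ℝ) ≤ z.im + 1/2)]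
    · have e1 : r * s * z.re + r * c * z.im + M
          = r * s * (z.re + 1/2) + r * c * (z.im + 1/2) := by rw [hMdef]; ring
      linarith [e1, mul_nonneg hrs0 (by linarith : (0:ℝ) ≤ z.re + 1/2),
        mul_nonneg hrc0 (by linarith : (0:ℝ) ≤ z.im + 1/2)]
    · have e1 : M - (r * s * z.re + r * c * z.im)
          = r * s * (1/2 - z.re) + r * c * (1/2 - z.im) := by rw [hMdef]; ring
      linarith [e1, mul_pos (mul_pos hr0 hc) (by linarith : (0:ℝ) < 1/2 - z.im),
        mul_nonneg hrs0 (by linarith : (0:ℝ) ≤ 1/2 - z.re)]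
  -- witnesses
  have wre : ∀ t : ℝ, -M < t → t < M → ∃ z ∈ cX, (ξ * z).re = t := by
    intro t h1 h2
    have hu1 : -(1/2 : ℝ) < t / (2 * M) := by
      rw [lt_div_iff₀ hM0]; linarith
    have hu2 : t / (2 * M) < 1/2 := by
      rw [div_lt_iff₀ hM0]; linarith
    refine ⟨⟨t / (2 * M), -(t / (2 * M))⟩,
      ⟨⟨hu1.le, hu2⟩,
        ⟨show -(1/2 : ℝ) ≤ -(t / (2 * M)) by linarith,
         show -(t / (2 * M)) < 1/2 by linarith⟩⟩, ?_⟩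
    rw [hre]
    show r * c * (t / (2 * M)) - r * s * (-(t / (2 * M))) = t
    have e : r * c * (t / (2 * M)) - r * s * (-(t / (2 * M)))
        = (r * (c + s)) * (t / (2 * M)) := by ring
    rw [e, hrcs, mul_div_cancel₀ _ (ne_of_gt hM0)]
  have wim : ∀ t : ℝ, -M < t → t < M → ∃ z ∈ cX, (ξ * z).im = t := by
    intro t h1 h2
    have hu1 : -(1/2 : ℝ) < t / (2 * M) := by
      rw [lt_div_iff₀ hM0]; linarith
    have hu2 : t / (2 * M) < 1/2 := by
      rw [div_lt_iff₀ hM0]; linarith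
    refine ⟨⟨t / (2 * M), t / (2 * M)⟩, ⟨⟨hu1.le, hu2⟩, ⟨hu1.le, hu2⟩⟩, ?_⟩
    rw [him]
    show r * s * (t / (2 * M)) + r * c * (t / (2 * M)) = t
    have e : r * s * (t / (2 * M)) + r * c * (t / (2 * M))
        = (r * (c + s)) * (t / (2 * M)) := by ring
    rw [e, hrcs, mul_div_cancel₀ _ (ne_of_gt hM0)]
  -- the extreme integers
  set A₁ : ℤ := ⌊1/2 - M⌋ with hA1def
  set A₂ : ℤ := ⌈M + 1/2⌉ - 1 with hA2def
  have hA1a : (A₁ : ℝ) ≤ 1/2 - M := Int.floor_le _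
  have hA1b : 1/2 - M - 1 < (A₁ : ℝ) := by
    have := Int.lt_floor_add_one (1/2 - M); rw [hA1def]; push_cast at this ⊢; linarith
  have hA2a : M + 1/2 ≤ (A₂ : ℝ) + 1 := by
    have := Int.le_ceil (M + 1/2); rw [hA2def]; push_cast at this ⊢; linarith
  have hA2b : (A₂ : ℝ) < M + 1/2 := by
    have := Int.ceil_lt_add_one (M + 1/2); rw [hA2def]; push_cast at this ⊢; linarith
  have hA2pos : (1 : ℝ) ≤ (A₂ : ℝ) := by
    have h2 : (1 : ℤ) < ⌈M + 1/2⌉ := by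
      rw [Int.lt_ceil]; push_cast; linarith
    have : (1 : ℤ) ≤ A₂ := by omega
    exact_mod_cast this
  -- floor facts
  have hfloorA2 : ∀ t : ℝ, (A₂ : ℝ) - 1/2 < t → t < M → ⌊t + 1/2⌋ = A₂ := by
    intro t h1 h2
    refine Int.floor_eq_iff.mpr ⟨by linarith, by push_cast; linarith⟩
  have hfloorA1 : ∀ t : ℝ, -M < t → t < (A₁ : ℝ) + 1/2 → ⌊t + 1/2⌋ = A₁ := by
    intro t h1 h2
    refine Int.floor_eq_iff.mpr ⟨by linarith, by push_cast; linarith⟩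
  -- digit bounds
  have hubD : ∀ d ∈ cD ξ, ((A₁ : ℝ) ≤ d.re ∧ d.re ≤ (A₂ : ℝ)) ∧
      ((A₁ : ℝ) ≤ d.im ∧ d.im ≤ (A₂ : ℝ)) := by
    rintro d ⟨z, hz, rfl⟩
    obtain ⟨h1, h2, h3, h4⟩ := hub z hz
    rw [cdg_re, cdg_im]
    have k1 : A₁ ≤ ⌊(ξ * z).re + 1/2⌋ := Int.floor_le_floor (by linarith)
    have k2 : ⌊(ξ * z).re + 1/2⌋ ≤ A₂ := by
      have : ⌊(ξ * z).re + 1/2⌋ < A₂ + 1 := Int.floor_lt.mpr (by push_cast; linarith)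
      omega
    have k3 : A₁ ≤ ⌊(ξ * z).im + 1/2⌋ := Int.floor_le_floor (by linarith)
    have k4 : ⌊(ξ * z).im + 1/2⌋ ≤ A₂ := by
      have : ⌊(ξ * z).im + 1/2⌋ < A₂ + 1 := Int.floor_lt.mpr (by push_cast; linarith)
      omega
    exact ⟨⟨by exact_mod_cast k1, by exact_mod_cast k2⟩,
      ⟨by exact_mod_cast k3, by exact_mod_cast k4⟩⟩
  -- extreme digits exist
  have dretop : ∃ d ∈ cD ξ, d.re = (A₂ : ℝ) := by
    obtain ⟨z, hz, hzt⟩ := wre (((A₂ : ℝ) - 1/2 + M)/2) (by linarith) (by linarith)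
    exact ⟨cdg ξ z, ⟨z, hz, rfl⟩, by
      rw [cdg_re, hfloorA2 _ (by linarith) (by linarith)]⟩
  have drebot : ∃ d ∈ cD ξ, d.re = (A₁ : ℝ) := by
    obtain ⟨z, hz, hzt⟩ := wre ((-M + ((A₁ : ℝ) + 1/2))/2) (by linarith) (by linarith)
    exact ⟨cdg ξ z, ⟨z, hz, rfl⟩, by
      rw [cdg_re, hfloorA1 _ (by linarith) (by linarith)]⟩
  have dimtop : ∃ d ∈ cD ξ, d.im = (A₂ : ℝ) := by
    obtain ⟨z, hz, hzt⟩ := wim (((A₂ : ℝ) - 1/2 + M)/2) (by linarith) (by linarith)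
    exact ⟨cdg ξ z, ⟨z, hz, rfl⟩, by
      rw [cdg_im, hfloorA2 _ (by linarith) (by linarith)]⟩
  have dimbot : ∃ d ∈ cD ξ, d.im = (A₁ : ℝ) := by
    obtain ⟨z, hz, hzt⟩ := wim ((-M + ((A₁ : ℝ) + 1/2))/2) (by linarith) (by linarith)
    exact ⟨cdg ξ z, ⟨z, hz, rfl⟩, by
      rw [cdg_im, hfloorA1 _ (by linarith) (by linarith)]⟩
  -- upper bounds of the rectangle from digit bounds
  have corner : ∀ p : ℂ, p ∈ ({z : ℂ | z.re ∈ Set.Icc x₁ x₂ ∧ z.im ∈ Set.Icc y₁ y₂}) →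
      ∃ d ∈ cD ξ, ∃ w ∈ closure cX, w + d = p := by
    intro p hp
    rw [← hrect] at hp
    simp only [Set.mem_iUnion, Set.mem_image] at hp
    obtain ⟨d, hd, w, hw, hwp⟩ := hp
    exact ⟨d, hd, w, hw, hwp⟩
  have hwcl : ∀ w : ℂ, w ∈ closure cX →
      (-(1/2 : ℝ) ≤ w.re ∧ w.re ≤ 1/2) ∧ (-(1/2 : ℝ) ≤ w.im ∧ w.im ≤ 1/2) := by
    intro w hw
    rw [closure_cX] at hw
    exact ⟨⟨hw.1.1, hw.1.2⟩, ⟨hw.2.1, hw.2.2⟩⟩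
  have hx2le : x₂ ≤ (A₂ : ℝ) + 1/2 := by
    obtain ⟨d, hd, w, hw, hwp⟩ := corner ⟨x₂, y₁⟩ ⟨⟨hx.le, le_refl _⟩, ⟨le_refl _, hy.le⟩⟩
    have := congrArg Complex.re hwp
    rw [Complex.add_re] at this
    have h1 := (hwcl w hw).1.2
    have h2 := ((hubD d hd).1).2
    show x₂ ≤ (A₂ : ℝ) + 1/2
    rw [show (⟨x₂, y₁⟩ : ℂ).re = x₂ from rfl] at this
    linarith
  have hx1ge : (A₁ : ℝ) - 1/2 ≤ x₁ := by
    obtain ⟨d, hd, w, hw, hwp⟩ := corner ⟨x₁, y₁⟩ ⟨⟨le_refl _, hx.le⟩, ⟨le_refl _, hy.le⟩⟩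
    have := congrArg Complex.re hwp
    rw [Complex.add_re] at this
    have h1 := (hwcl w hw).1.1
    have h2 := ((hubD d hd).1).1
    rw [show (⟨x₁, y₁⟩ : ℂ).re = x₁ from rfl] at this
    linarith
  have hy2le : y₂ ≤ (A₂ : ℝ) + 1/2 := by
    obtain ⟨d, hd, w, hw, hwp⟩ := corner ⟨x₁, y₂⟩ ⟨⟨le_refl _, hx.le⟩, ⟨hy.le, le_refl _⟩⟩
    have := congrArg Complex.im hwp
    rw [Complex.add_im] at this
    have h1 := (hwcl w hw).2.2
    have h2 := ((hubD d hd).2).2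
    rw [show (⟨x₁, y₂⟩ : ℂ).im = y₂ from rfl] at this
    linarith
  have hy1ge : (A₁ : ℝ) - 1/2 ≤ y₁ := by
    obtain ⟨d, hd, w, hw, hwp⟩ := corner ⟨x₁, y₁⟩ ⟨⟨le_refl _, hx.le⟩, ⟨le_refl _, hy.le⟩⟩
    have := congrArg Complex.im hwp
    rw [Complex.add_im] at this
    have h1 := (hwcl w hw).2.1
    have h2 := ((hubD d hd).2).1
    rw [show (⟨x₁, y₁⟩ : ℂ).im = y₁ from rfl] at this
    linarith
  -- lower bounds of the rectangle from extreme digits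
  have hmemD : ∀ (d w : ℂ), d ∈ cD ξ → w ∈ closure cX →
      (w + d) ∈ {z : ℂ | z.re ∈ Set.Icc x₁ x₂ ∧ z.im ∈ Set.Icc y₁ y₂} := by
    intro d w hd hw
    rw [← hrect]
    simp only [Set.mem_iUnion, Set.mem_image]
    exact ⟨d, hd, w, hw, rfl⟩
  have hwhalf : ∀ a b : ℝ, -(1/2 : ℝ) ≤ a → a ≤ 1/2 → -(1/2 : ℝ) ≤ b → b ≤ 1/2 →
      (⟨a, b⟩ : ℂ) ∈ closure cX := by
    intro a b h1 h2 h3 h4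
    rw [closure_cX]
    exact ⟨⟨h1, h2⟩, ⟨h3, h4⟩⟩
  have hx2ge : (A₂ : ℝ) + 1/2 ≤ x₂ := by
    obtain ⟨d, hd, hdre⟩ := dretop
    have := (hmemD d ⟨1/2, 0⟩ hd (hwhalf _ _ (by norm_num) (by norm_num) (by norm_num) (by norm_num))).1.2
    rw [Complex.add_re, show ((⟨1/2, 0⟩ : ℂ)).re = 1/2 from rfl, hdre] at this
    linarith
  have hx1le : x₁ ≤ (A₁ : ℝ) - 1/2 := by
    obtain ⟨d, hd, hdre⟩ := drebot
    have := (hmemD d ⟨-(1/2), 0⟩ hd (hwhalf _ _ (by norm_num) (by norm_num) (by norm_num) (by norm_num))).1.1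
    rw [Complex.add_re, show ((⟨-(1/2), 0⟩ : ℂ)).re = -(1/2) from rfl, hdre] at this
    linarith
  have hy2ge : (A₂ : ℝ) + 1/2 ≤ y₂ := by
    obtain ⟨d, hd, hdim⟩ := dimtop
    have := (hmemD d ⟨0, 1/2⟩ hd (hwhalf _ _ (by norm_num) (by norm_num) (by norm_num) (by norm_num))).2.2
    rw [Complex.add_im, show ((⟨0, 1/2⟩ : ℂ)).im = 1/2 from rfl, hdim] at this
    linarith
  have hy1le : y₁ ≤ (A₁ : ℝ) - 1/2 := by
    obtain ⟨d, hd, hdim⟩ := dimbot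
    have := (hmemD d ⟨0, -(1/2)⟩ hd (hwhalf _ _ (by norm_num) (by norm_num) (by norm_num) (by norm_num))).2.1
    rw [Complex.add_im, show ((⟨0, -(1/2)⟩ : ℂ)).im = -(1/2) from rfl, hdim] at this
    linarith
  linarith
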